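/- Let h > 0 and N ∈ ℕ with N ≥ 3. Let v, w : ℝ → ℝ be continuous, equal to 0 on (−∞, h] ∪ [(N−1)h, ∞), and affine on each element [(i−1)h, i·h] with slope a_i (for v) and b_i (for w), i = 1,…,N. Let K ∈ ℕ, K ≥ 1, let 0 < c_1 < … < c_K < h, and let ω_1,…,ω_K ≥ 0 satisfy the exactness condition 2·∑_{k=1}^{K} ω_k·c_k² = 2h³/3. Define D(v,w) := ∫₀^{Nh} ∫₀^{Nh} 1_{{|y−x|<h}} · h^{−3} · (v(y) − v(x))(w(y) − w(x)) dy dx and D^h(v,w) := ∫₀^{Nh} h^{−3} ∑_{k=1}^{K} [(v(x + c_k) − v(x))(w(x + c_k) − w(x)) + (v(x − c_k) − v(x))(w(x − c_k) − w(x))]·ω_k dx. Then D(v,w) − D^h(v,w) = ((1/(3h³))·∑_{k=1}^{K} ω_k·c_k³ − h/12) · ∑_{i=1}^{N−1} (a_{i+1} − a_i)(b_{i+1} − b_i); in particular |D(v,w) − D^h(v,w)| ≤ (7h/36)·∑_{i=1}^{N−1} |a_{i+1} − a_i|·|b_{i+1} − b_i|. -/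

import Mathlib

open MeasureTheory intervalIntegral Finset Set

namespace QCE1D

variable {h : ℝ} {N : ℕ} {v w : ℝ → ℝ} {a b : ℕ → ℝ}

lemma slope_first (hh : 0 < h) (hN : 3 ≤ N)
    (hv0 : ∀ x : ℝ, x ≤ h ∨ ((N : ℝ) - 1) * h ≤ x → v x = 0)
    (hva : ∀ i ∈ Finset.Icc 1 N, ∀ x ∈ Set.Icc (((i : ℝ) - 1) * h) ((i : ℝ) * h),
      v x = v (((i : ℝ) - 1) * h) + a i * (x - ((i : ℝ) - 1) * h)) :
    a 1 = 0 := by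
  have h1 : (1:ℕ) ∈ Finset.Icc 1 N := Finset.mem_Icc.2 ⟨le_refl _, by omega⟩
  have hx : h ∈ Set.Icc ((((1:ℕ):ℝ) - 1) * h) (((1:ℕ):ℝ) * h) := by
    norm_num [hh.le]
  have := hva 1 h1 h hx
  rw [hv0 h (Or.inl le_rfl)] at this
  have h0 : v ((((1:ℕ):ℝ) - 1) * h) = 0 := by
    apply hv0; left; norm_num [hh.le]
  rw [h0] at this
  have : a 1 * h = 0 := by push_cast at this; linarith
  rcases mul_eq_zero.1 this with h' | h'
  · exact h'
  · exact absurd h' hh.ne'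

lemma slope_last (hh : 0 < h) (hN : 3 ≤ N)
    (hv0 : ∀ x : ℝ, x ≤ h ∨ ((N : ℝ) - 1) * h ≤ x → v x = 0)
    (hva : ∀ i ∈ Finset.Icc 1 N, ∀ x ∈ Set.Icc (((i : ℝ) - 1) * h) ((i : ℝ) * h),
      v x = v (((i : ℝ) - 1) * h) + a i * (x - ((i : ℝ) - 1) * h)) :
    a N = 0 := by
  have h1 : N ∈ Finset.Icc 1 N := Finset.mem_Icc.2 ⟨by omega, le_refl _⟩
  have hx : (N:ℝ) * h ∈ Set.Icc (((N:ℝ) - 1) * h) ((N:ℝ) * h) := by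
    constructor <;> nlinarith
  have := hva N h1 ((N:ℝ) * h) hx
  rw [hv0 _ (Or.inr (by nlinarith)), hv0 _ (Or.inr le_rfl)] at this
  have h2 : a N * h = 0 := by linarith [this]; 
  rcases mul_eq_zero.1 (by linarith : a N * h = 0) with h' | h'
  · exact h'
  · exact absurd h' hh.ne'






lemma tele (N : ℕ) (g : ℕ → ℝ) (hN : 1 ≤ N) :
    ∑ i ∈ Finset.Icc 1 (N-1), (g (i+1) - g i) = g N - g 1 := by
  have hIcc : Finset.Icc 1 (N-1) = Finset.Ico 1 N := by
    rw [← Finset.Ico_add_one_right_eq_Icc]; congr 1; omega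
  rw [hIcc, Finset.sum_Ico_eq_sum_range]
  have h2 := Finset.sum_range_sub (fun j => g (j+1)) (N-1)
  have h3 : ∀ i, g (1 + i + 1) - g (1 + i) = g (i + 1 + 1) - g (i + 1) := by
    intro i; rw [add_comm 1 i]
  calc ∑ i ∈ Finset.range (N-1), (g (1 + i + 1) - g (1 + i))
      = ∑ i ∈ Finset.range (N-1), (g (i + 1 + 1) - g (i + 1)) := by
        exact Finset.sum_congr rfl (fun i _ => h3 i)
    _ = g (N - 1 + 1) - g 1 := by simpa using h2
    _ = g N - g 1 := by rw [show N - 1 + 1 = N by omega]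

lemma diff_reg1 (hh : 0 < h) {i : ℕ} (hi1 : 1 ≤ i) (hiN : i ≤ N)
    (hva : ∀ i ∈ Finset.Icc 1 N, ∀ x ∈ Set.Icc (((i : ℝ) - 1) * h) ((i : ℝ) * h),
      v x = v (((i : ℝ) - 1) * h) + a i * (x - ((i : ℝ) - 1) * h))
    {t : ℝ} (ht0 : 0 ≤ t) (hth : t ≤ h)
    {x : ℝ} (hx1 : ((i:ℝ) - 1) * h ≤ x) (hx2 : x ≤ (i:ℝ) * h - t) :
    v (x + t) - v x = a i * t := by
  have hmem : i ∈ Finset.Icc 1 N := Finset.mem_Icc.2 ⟨hi1, hiN⟩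
  have e1 := hva i hmem x ⟨hx1, by linarith⟩
  have e2 := hva i hmem (x + t) ⟨by linarith, by linarith⟩
  rw [e1, e2]; ring

lemma diff_reg2 (hh : 0 < h) {i : ℕ} (hi1 : 1 ≤ i) (hiN : i + 1 ≤ N)
    (hva : ∀ i ∈ Finset.Icc 1 N, ∀ x ∈ Set.Icc (((i : ℝ) - 1) * h) ((i : ℝ) * h),
      v x = v (((i : ℝ) - 1) * h) + a i * (x - ((i : ℝ) - 1) * h))
    {t : ℝ} (ht0 : 0 ≤ t) (hth : t ≤ h)
    {x : ℝ} (hx1 : (i:ℝ) * h - t ≤ x) (hx2 : x ≤ (i:ℝ) * h) :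
    v (x + t) - v x = a i * t + (a (i+1) - a i) * (x + t - (i:ℝ) * h) := by
  have hmem : i ∈ Finset.Icc 1 N := Finset.mem_Icc.2 ⟨hi1, by omega⟩
  have hmem' : i + 1 ∈ Finset.Icc 1 N := Finset.mem_Icc.2 ⟨by omega, hiN⟩
  have e1 := hva i hmem x ⟨by linarith, hx2⟩
  have e2 := hva (i+1) hmem' (x + t) (by
    constructor <;> · push_cast; linarith)
  have e3 := hva i hmem ((i:ℝ) * h) ⟨by nlinarith, le_rfl⟩
  have e4 : v ((((i+1:ℕ):ℝ) - 1) * h) = v ((i:ℝ) * h) := by norm_num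
  rw [e1, e2, e4, e3]; push_cast; ring

lemma psi_cont (hv : Continuous v) (hw : Continuous w) (t : ℝ) :
    Continuous (fun x => (v (x+t) - v x) * (w (x+t) - w x)) := by
  have h1 : Continuous (fun x : ℝ => x + t) := continuous_id.add continuous_const
  exact ((hv.comp h1).sub hv).mul ((hw.comp h1).sub hw)

lemma elem_integral (hh : 0 < h) (hv : Continuous v) (hw : Continuous w)
    (hva : ∀ i ∈ Finset.Icc 1 N, ∀ x ∈ Set.Icc (((i : ℝ) - 1) * h) ((i : ℝ) * h),
      v x = v (((i : ℝ) - 1) * h) + a i * (x - ((i : ℝ) - 1) * h))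
    (hwb : ∀ i ∈ Finset.Icc 1 N, ∀ x ∈ Set.Icc (((i : ℝ) - 1) * h) ((i : ℝ) * h),
      w x = w (((i : ℝ) - 1) * h) + b i * (x - ((i : ℝ) - 1) * h))
    {i : ℕ} (hi1 : 1 ≤ i) (hiN : i + 1 ≤ N)
    {t : ℝ} (ht0 : 0 ≤ t) (hth : t ≤ h) :
    ∫ x in (((i:ℝ)-1)*h)..((i:ℝ)*h), (v (x+t) - v x) * (w (x+t) - w x)
      = h * t^2 * (a i * b i)
        - t^3/6 * ((a (i+1) - a i) * (b (i+1) - b i))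
        + t^3/2 * (a (i+1) * b (i+1) - a i * b i) := by
  set ψ : ℝ → ℝ := fun x => (v (x+t) - v x) * (w (x+t) - w x) with hψdef
  have hψc : Continuous ψ := psi_cont hv hw t
  have hle1 : ((i:ℝ)-1)*h ≤ (i:ℝ)*h - t := by linarith
  have hle2 : (i:ℝ)*h - t ≤ (i:ℝ)*h := by linarith
  have hadd : (∫ x in (((i:ℝ)-1)*h)..((i:ℝ)*h - t), ψ x)
      + (∫ x in ((i:ℝ)*h - t)..((i:ℝ)*h), ψ x)
      = ∫ x in (((i:ℝ)-1)*h)..((i:ℝ)*h), ψ x :=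
    intervalIntegral.integral_add_adjacent_intervals
      (hψc.intervalIntegrable _ _) (hψc.intervalIntegrable _ _)
  rw [← hadd]
  -- piece 1
  have hp1 : (∫ x in (((i:ℝ)-1)*h)..((i:ℝ)*h - t), ψ x)
      = (h - t) * (a i * b i * t^2) := by
    rw [intervalIntegral.integral_congr (g := fun _ => a i * b i * t^2)
      (by
        intro x hx
        rw [Set.uIcc_of_le hle1] at hx
        have e1 := diff_reg1 hh hi1 (by omega) hva ht0 hth hx.1 hx.2
        have e2 := diff_reg1 hh hi1 (by omega) hwb ht0 hth hx.1 hx.2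
        show ψ x = _
        rw [hψdef]; dsimp only; rw [e1, e2]; ring)]
    simp
    ring
  -- piece 2 by FTC
  set Δa := a (i+1) - a i with hΔa
  set Δb := b (i+1) - b i with hΔb
  set r : ℝ := (i:ℝ)*h - t with hr
  set F : ℝ → ℝ := fun x => (a i * t) * (b i * t) * (x - r)
      + ((a i * t) * Δb + (b i * t) * Δa) * ((x - r)^2 / 2)
      + Δa * Δb * ((x - r)^3 / 3) with hF
  have hp2 : (∫ x in ((i:ℝ)*h - t)..((i:ℝ)*h), ψ x)
      = F ((i:ℝ)*h) - F ((i:ℝ)*h - t) := by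
    apply intervalIntegral.integral_eq_sub_of_hasDerivAt
    · intro x hx
      rw [Set.uIcc_of_le hle2] at hx
      have hu : HasDerivAt (fun x : ℝ => x - r) 1 x := (hasDerivAt_id x).sub_const r
      have h2 : HasDerivAt (fun x : ℝ => (x - r)^2) (2 * (x - r)^1 * 1) x := hu.pow 2
      have h3 : HasDerivAt (fun x : ℝ => (x - r)^3) (3 * (x - r)^2 * 1) x := hu.pow 3
      have H : HasDerivAt F
          ((a i * t) * (b i * t) * 1
            + ((a i * t) * Δb + (b i * t) * Δa) * ((2 * (x - r)^1 * 1) / 2)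
            + Δa * Δb * ((3 * (x - r)^2 * 1) / 3)) x :=
        ((hu.const_mul _).add ((h2.div_const 2).const_mul _)).add
          ((h3.div_const 3).const_mul _)
      have ev : HasDerivAt F (v (x+t) - v x) x → True := fun _ => trivial
      have e1 := diff_reg2 hh hi1 hiN hva ht0 hth hx.1 hx.2
      have e2 := diff_reg2 hh hi1 hiN hwb ht0 hth hx.1 hx.2
      have key : (a i * t) * (b i * t) * 1
            + ((a i * t) * Δb + (b i * t) * Δa) * ((2 * (x - r)^1 * 1) / 2)
            + Δa * Δb * ((3 * (x - r)^2 * 1) / 3) = ψ x := by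
        rw [hψdef]; dsimp only; rw [e1, e2, hΔa, hΔb, hr]; ring
      rw [key] at H; exact H
    · exact hψc.intervalIntegrable _ _
  rw [hp1, hp2, hF]
  dsimp only
  rw [hr]
  ring


lemma L_formula (hh : 0 < h) (hN : 3 ≤ N) (hv : Continuous v) (hw : Continuous w)
    (hv0 : ∀ x : ℝ, x ≤ h ∨ ((N : ℝ) - 1) * h ≤ x → v x = 0)
    (hw0 : ∀ x : ℝ, x ≤ h ∨ ((N : ℝ) - 1) * h ≤ x → w x = 0)
    (hva : ∀ i ∈ Finset.Icc 1 N, ∀ x ∈ Set.Icc (((i : ℝ) - 1) * h) ((i : ℝ) * h),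
      v x = v (((i : ℝ) - 1) * h) + a i * (x - ((i : ℝ) - 1) * h))
    (hwb : ∀ i ∈ Finset.Icc 1 N, ∀ x ∈ Set.Icc (((i : ℝ) - 1) * h) ((i : ℝ) * h),
      w x = w (((i : ℝ) - 1) * h) + b i * (x - ((i : ℝ) - 1) * h))
    {t : ℝ} (ht0 : 0 ≤ t) (hth : t ≤ h) :
    ∫ x in (0:ℝ)..((N:ℝ)*h), (v (x+t) - v x) * (w (x+t) - w x)
      = t^2 * h * (∑ i ∈ Finset.Icc 1 (N-1), a i * b i)
        - t^3 * (∑ i ∈ Finset.Icc 1 (N-1), (a (i+1) - a i) * (b (i+1) - b i)) / 6 := by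
  have hψc : Continuous (fun x => (v (x+t) - v x) * (w (x+t) - w x)) := psi_cont hv hw t
  have hadj := intervalIntegral.sum_integral_adjacent_intervals (μ := volume)
    (f := fun x => (v (x+t) - v x) * (w (x+t) - w x))
    (a := fun i : ℕ => (i:ℝ)*h) (n := N)
    (fun i _ => hψc.intervalIntegrable _ _)
  simp only [Nat.cast_zero, zero_mul] at hadj
  rw [← hadj]
  set g : ℕ → ℝ := fun j => h * t^2 * (a j * b j)
      - t^3/6 * ((a (j+1) - a j) * (b (j+1) - b j))
      + t^3/2 * (a (j+1) * b (j+1) - a j * b j) with hg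
  have hsplit : ∑ i ∈ Finset.range N,
        (∫ x in ((i:ℝ)*h)..(((i:ℕ)+1:ℕ):ℝ)*h, (v (x+t) - v x) * (w (x+t) - w x))
      = (∑ i ∈ Finset.range (N-1),
        (∫ x in ((i:ℝ)*h)..(((i:ℕ)+1:ℕ):ℝ)*h, (v (x+t) - v x) * (w (x+t) - w x)))
        + (∫ x in (((N-1:ℕ):ℝ)*h)..(((N-1:ℕ)+1:ℕ):ℝ)*h, (v (x+t) - v x) * (w (x+t) - w x)) := by
    rw [← Finset.sum_range_succ, show N-1+1 = N by omega]
  have hlast : (∫ x in (((N-1:ℕ):ℝ)*h)..(((N-1:ℕ)+1:ℕ):ℝ)*h,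
      (v (x+t) - v x) * (w (x+t) - w x)) = 0 := by
    have hNR : ((N-1:ℕ):ℝ) = (N:ℝ) - 1 := by
      push_cast [Nat.cast_sub (by omega : 1 ≤ N)]; ring
    rw [intervalIntegral.integral_congr (g := fun _ => (0:ℝ))]
    · simp
    · intro x hx
      have hle : ((N-1:ℕ):ℝ)*h ≤ (((N-1:ℕ)+1:ℕ):ℝ)*h := by
        apply mul_le_mul_of_nonneg_right _ hh.le; push_cast; linarith
      rw [Set.uIcc_of_le hle] at hx
      have hx1 : ((N:ℝ) - 1) * h ≤ x := by rw [← hNR]; exact hx.1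
      have e1 : v x = 0 := hv0 x (Or.inr hx1)
      have e2 : v (x+t) = 0 := hv0 (x+t) (Or.inr (by linarith))
      show (v (x+t) - v x) * (w (x+t) - w x) = 0
      rw [e1, e2]; ring
  have hmain : ∀ i ∈ Finset.range (N-1),
      (∫ x in ((i:ℝ)*h)..(((i:ℕ)+1:ℕ):ℝ)*h, (v (x+t) - v x) * (w (x+t) - w x)) = g (i+1) := by
    intro i hi
    have hi' : i < N - 1 := Finset.mem_range.1 hi
    have e := elem_integral hh hv hw hva hwb (i := i+1) (by omega) (by omega) ht0 hth
    have hb : (((i+1:ℕ):ℝ) - 1) * h = (i:ℝ)*h := by push_cast; ring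
    rw [hb] at e
    rw [e]
  rw [hsplit, hlast, add_zero, Finset.sum_congr rfl hmain]
  have hIcc : Finset.Icc 1 (N-1) = Finset.Ico 1 N := by
    rw [← Finset.Ico_add_one_right_eq_Icc]; congr 1; omega
  have hre : ∑ i ∈ Finset.range (N-1), g (i+1) = ∑ j ∈ Finset.Icc 1 (N-1), g j := by
    rw [hIcc, Finset.sum_Ico_eq_sum_range]
    exact Finset.sum_congr rfl (fun i _ => by rw [add_comm 1 i])
  rw [hre]
  have hsum : ∑ j ∈ Finset.Icc 1 (N-1), g j
      = h * t^2 * (∑ j ∈ Finset.Icc 1 (N-1), a j * b j)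
        - t^3/6 * (∑ j ∈ Finset.Icc 1 (N-1), (a (j+1) - a j) * (b (j+1) - b j))
        + t^3/2 * (∑ j ∈ Finset.Icc 1 (N-1), (a (j+1) * b (j+1) - a j * b j)) := by
    rw [Finset.mul_sum, Finset.mul_sum, Finset.mul_sum, ← Finset.sum_sub_distrib,
      ← Finset.sum_add_distrib]
  have htele : ∑ j ∈ Finset.Icc 1 (N-1), (a (j+1) * b (j+1) - a j * b j)
      = a N * b N - a 1 * b 1 := tele N (fun j => a j * b j) (by omega)
  have ha1 : a 1 = 0 := slope_first hh hN hv0 hva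
  have haN : a N = 0 := slope_last hh hN hv0 hva
  rw [hsum, htele, ha1, haN]
  ring


lemma shift_neg (hh : 0 < h) (hN : 3 ≤ N) (hv : Continuous v) (hw : Continuous w)
    (hv0 : ∀ x : ℝ, x ≤ h ∨ ((N : ℝ) - 1) * h ≤ x → v x = 0)
    (hw0 : ∀ x : ℝ, x ≤ h ∨ ((N : ℝ) - 1) * h ≤ x → w x = 0)
    {s : ℝ} (hs0 : 0 ≤ s) (hsh : s ≤ h) :
    ∫ x in (0:ℝ)..((N:ℝ)*h), (v (x - s) - v x) * (w (x - s) - w x)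
      = ∫ x in (0:ℝ)..((N:ℝ)*h), (v (x + s) - v x) * (w (x + s) - w x) := by
  set f : ℝ → ℝ := fun y => (v (y + s) - v y) * (w (y + s) - w y) with hf
  have hfc : Continuous f := by
    have h1 : Continuous (fun x : ℝ => x + s) := continuous_id.add continuous_const
    exact ((hv.comp h1).sub hv).mul ((hw.comp h1).sub hw)
  have hNh : (0:ℝ) ≤ (N:ℝ)*h := by positivity
  have hstep : ∀ x : ℝ, (v (x - s) - v x) * (w (x - s) - w x) = f (x - s) := by
    intro x; rw [hf]; dsimp only; rw [sub_add_cancel]; ring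
  rw [intervalIntegral.integral_congr (g := fun x => f (x - s)) (fun x _ => hstep x)]
  rw [intervalIntegral.integral_comp_sub_right f s]
  have hzero1 : (∫ y in ((0:ℝ) - s)..(0:ℝ), f y) = 0 := by
    rw [intervalIntegral.integral_congr (g := fun _ => (0:ℝ))]
    · simp
    · intro y hy
      rw [Set.uIcc_of_le (by linarith)] at hy
      have e1 : v y = 0 := hv0 y (Or.inl (by linarith [hy.2]))
      have e2 : v (y + s) = 0 := hv0 (y + s) (Or.inl (by linarith [hy.2]))
      show f y = 0
      rw [hf]; dsimp only; rw [e1, e2]; ring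
  have hzero2 : (∫ y in ((N:ℝ)*h - s)..((N:ℝ)*h), f y) = 0 := by
    rw [intervalIntegral.integral_congr (g := fun _ => (0:ℝ))]
    · simp
    · intro y hy
      rw [Set.uIcc_of_le (by linarith)] at hy
      have hy1 : ((N:ℝ) - 1) * h ≤ y := by
        have := hy.1; nlinarith
      have e1 : v y = 0 := hv0 y (Or.inr hy1)
      have e2 : v (y + s) = 0 := hv0 (y + s) (Or.inr (by linarith))
      show f y = 0
      rw [hf]; dsimp only; rw [e1, e2]; ring
  have hadd1 : (∫ y in ((0:ℝ) - s)..(0:ℝ), f y) + (∫ y in (0:ℝ)..((N:ℝ)*h - s), f y)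
      = ∫ y in ((0:ℝ) - s)..((N:ℝ)*h - s), f y :=
    intervalIntegral.integral_add_adjacent_intervals
      (hfc.intervalIntegrable _ _) (hfc.intervalIntegrable _ _)
  have hadd2 : (∫ y in (0:ℝ)..((N:ℝ)*h - s), f y) + (∫ y in ((N:ℝ)*h - s)..((N:ℝ)*h), f y)
      = ∫ y in (0:ℝ)..((N:ℝ)*h), f y :=
    intervalIntegral.integral_add_adjacent_intervals
      (hfc.intervalIntegrable _ _) (hfc.intervalIntegrable _ _)
  rw [← hadd1, hzero1, zero_add, ← hadd2, hzero2, add_zero]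


lemma inner_rewrite (hh : 0 < h) (hN : 3 ≤ N) (hv : Continuous v) (hw : Continuous w)
    (hv0 : ∀ x : ℝ, x ≤ h ∨ ((N : ℝ) - 1) * h ≤ x → v x = 0)
    (hw0 : ∀ x : ℝ, x ≤ h ∨ ((N : ℝ) - 1) * h ≤ x → w x = 0)
    {x : ℝ} (hx0 : 0 ≤ x) (hxN : x ≤ (N:ℝ)*h) :
    (∫ y in (0:ℝ)..((N:ℝ)*h), (if |y - x| < h then h⁻¹^3 * ((v y - v x) * (w y - w x)) else 0))
      = h⁻¹^3 * ∫ t in (-h:ℝ)..h, (v (x+t) - v x) * (w (x+t) - w x) := by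
  set φ : ℝ → ℝ := fun y => (v y - v x) * (w y - w x) with hφdef
  have hφ : Continuous φ := ((hv.sub continuous_const).mul (hw.sub continuous_const))
  set g : ℝ → ℝ := fun y => if |y - x| < h then φ y else 0 with hgdef
  have hcond : ∀ y : ℝ, (|y - x| < h) ↔ y ∈ Set.Ioo (x-h) (x+h) := by
    intro y; rw [Set.mem_Ioo, abs_lt]
    constructor <;> (intro hu; constructor <;> linarith [hu.1, hu.2])
  have hgind : g = Set.indicator (Set.Ioo (x-h) (x+h)) φ := by
    funext y; rw [Set.indicator_apply, hgdef]
    exact if_congr (hcond y) rfl rfl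
  have hgi : ∀ A B : ℝ, IntervalIntegrable g volume A B := by
    intro A B
    rw [hgind]
    constructor <;> exact (hφ.integrableOn_Ioc).indicator measurableSet_Ioo
  -- step 1: pull out constant
  have hstep1 : (∫ y in (0:ℝ)..((N:ℝ)*h),
        (if |y - x| < h then h⁻¹^3 * ((v y - v x) * (w y - w x)) else 0))
      = h⁻¹^3 * ∫ y in (0:ℝ)..((N:ℝ)*h), g y := by
    rw [← intervalIntegral.integral_const_mul]
    apply intervalIntegral.integral_congr
    intro y _
    rw [hgdef]; dsimp only
    split <;> simp [hφdef]
  rw [hstep1]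
  congr 1
  -- outer pieces vanish
  have hzero1 : (∫ y in (0:ℝ)..(x-h), g y) = 0 := by
    rw [intervalIntegral.integral_congr (g := fun _ => (0:ℝ))]
    · simp
    · intro y hy
      show g y = 0
      rw [hgdef]; dsimp only
      by_cases hc : |y - x| < h
      · rw [if_pos hc]
        have habs := abs_lt.1 hc
        rcases le_or_gt 0 (x - h) with hcase | hcase
        · exfalso
          rw [Set.uIcc_of_le hcase] at hy
          linarith [hy.2, habs.1]
        · rw [Set.uIcc_of_ge hcase.le] at hy
          have e1 : v y = 0 := hv0 y (Or.inl (by linarith [hy.2]))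
          have e2 : v x = 0 := hv0 x (Or.inl (by linarith [habs.1, hy.2]))
          rw [hφdef]; dsimp only; rw [e1, e2]; ring
      · rw [if_neg hc]
  have hzero2 : (∫ y in (x+h)..((N:ℝ)*h), g y) = 0 := by
    rw [intervalIntegral.integral_congr (g := fun _ => (0:ℝ))]
    · simp
    · intro y hy
      show g y = 0
      rw [hgdef]; dsimp only
      by_cases hc : |y - x| < h
      · rw [if_pos hc]
        have habs := abs_lt.1 hc
        rcases le_or_gt (x + h) ((N:ℝ)*h) with hcase | hcase
        · exfalso
          rw [Set.uIcc_of_le hcase] at hy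
          linarith [hy.1, habs.2]
        · rw [Set.uIcc_of_ge hcase.le] at hy
          have hyN : ((N:ℝ) - 1) * h ≤ y := by nlinarith [hy.1]
          have e1 : v y = 0 := hv0 y (Or.inr hyN)
          have e2 : v x = 0 := hv0 x (Or.inr (by nlinarith [hy.1, habs.2]))
          rw [hφdef]; dsimp only; rw [e1, e2]; ring
      · rw [if_neg hc]
  have hadd1 : (∫ y in (0:ℝ)..(x-h), g y) + (∫ y in (x-h)..(x+h), g y)
      = ∫ y in (0:ℝ)..(x+h), g y :=
    intervalIntegral.integral_add_adjacent_intervals (hgi _ _) (hgi _ _)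
  have hadd2 : (∫ y in (0:ℝ)..(x+h), g y) + (∫ y in (x+h)..((N:ℝ)*h), g y)
      = ∫ y in (0:ℝ)..((N:ℝ)*h), g y :=
    intervalIntegral.integral_add_adjacent_intervals (hgi _ _) (hgi _ _)
  rw [← hadd2, hzero2, add_zero, ← hadd1, hzero1, zero_add]
  -- middle piece: drop indicator
  have hmid : (∫ y in (x-h)..(x+h), g y) = ∫ y in (x-h)..(x+h), φ y := by
    have hle : x - h ≤ x + h := by linarith
    rw [intervalIntegral.integral_of_le hle, intervalIntegral.integral_of_le hle,
      MeasureTheory.integral_Ioc_eq_integral_Ioo, MeasureTheory.integral_Ioc_eq_integral_Ioo]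
    apply MeasureTheory.setIntegral_congr_fun measurableSet_Ioo
    intro y hy
    show g y = φ y
    rw [hgdef]; dsimp only
    rw [if_pos ((hcond y).2 hy)]
  rw [hmid]
  -- substitution t = y - x
  have hsub := intervalIntegral.integral_comp_add_left (a := (-h:ℝ)) (b := (h:ℝ)) φ x
  rw [show x + -h = x - h by ring] at hsub
  rw [← hsub]


lemma fubini_swap (hh : 0 < h) (hN : 3 ≤ N) (hv : Continuous v) (hw : Continuous w) :
    (∫ x in (0:ℝ)..((N:ℝ)*h), ∫ t in (-h:ℝ)..h, (v (x+t) - v x) * (w (x+t) - w x))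
      = ∫ t in (-h:ℝ)..h, ∫ x in (0:ℝ)..((N:ℝ)*h), (v (x+t) - v x) * (w (x+t) - w x) := by
  have hNh : (0:ℝ) ≤ (N:ℝ)*h := by positivity
  have hhh : (-h:ℝ) ≤ h := by linarith
  have hcont : Continuous (fun p : ℝ × ℝ => (v (p.1 + p.2) - v p.1) * (w (p.1 + p.2) - w p.1)) := by
    have hadd : Continuous (fun p : ℝ × ℝ => p.1 + p.2) := continuous_fst.add continuous_snd
    exact ((hv.comp hadd).sub (hv.comp continuous_fst)).mul
      ((hw.comp hadd).sub (hw.comp continuous_fst))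
  have hint : Integrable (Function.uncurry
        (fun x t => (v (x+t) - v x) * (w (x+t) - w x)))
      ((volume.restrict (Set.Ioc (0:ℝ) ((N:ℝ)*h))).prod (volume.restrict (Set.Ioc (-h:ℝ) h))) := by
    rw [Measure.prod_restrict]
    have : IntegrableOn (Function.uncurry (fun x t => (v (x+t) - v x) * (w (x+t) - w x)))
        (Set.Icc (0:ℝ) ((N:ℝ)*h) ×ˢ Set.Icc (-h:ℝ) h) (volume.prod volume) := by
      rw [← Measure.volume_eq_prod]
      exact hcont.continuousOn.integrableOn_compact (isCompact_Icc.prod isCompact_Icc)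
    rw [← Measure.volume_eq_prod]
    exact this.mono_set (Set.prod_mono Set.Ioc_subset_Icc_self Set.Ioc_subset_Icc_self)
  rw [intervalIntegral.integral_of_le hNh, intervalIntegral.integral_of_le hhh]
  simp_rw [intervalIntegral.integral_of_le hhh, intervalIntegral.integral_of_le hNh]
  exact MeasureTheory.integral_integral_swap hint

lemma outer_eval (hh : 0 < h) (P S : ℝ) (G : ℝ → ℝ)
    (hG : ∀ t ∈ Set.Icc (-h) h, G t = t^2*h*P - |t|^3*S/6) :
    ∫ t in (-h:ℝ)..h, G t = 2*h^4*P/3 - h^4*S/12 := by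
  have hcont : Continuous (fun t : ℝ => t^2*h*P - |t|^3*S/6) := by
    apply Continuous.sub
    · exact ((continuous_pow 2).mul continuous_const).mul continuous_const
    · exact ((continuous_abs.pow 3).mul continuous_const).div_const 6
  have h1 : (∫ t in (-h:ℝ)..h, G t) = ∫ t in (-h:ℝ)..h, (t^2*h*P - |t|^3*S/6) := by
    apply intervalIntegral.integral_congr
    rw [Set.uIcc_of_le (by linarith)]
    exact hG
  rw [h1]
  have hadd : (∫ t in (-h:ℝ)..(0:ℝ), (t^2*h*P - |t|^3*S/6))
      + (∫ t in (0:ℝ)..h, (t^2*h*P - |t|^3*S/6))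
      = ∫ t in (-h:ℝ)..h, (t^2*h*P - |t|^3*S/6) :=
    intervalIntegral.integral_add_adjacent_intervals
      (hcont.intervalIntegrable _ _) (hcont.intervalIntegrable _ _)
  rw [← hadd]
  have hp1 : (∫ t in (-h:ℝ)..(0:ℝ), (t^2*h*P - |t|^3*S/6)) = h^4*P/3 - h^4*S/24 := by
    have : (∫ t in (-h:ℝ)..(0:ℝ), (t^2*h*P - |t|^3*S/6))
        = (fun t => h*P*t^3/3 + S*t^4/24) 0 - (fun t => h*P*t^3/3 + S*t^4/24) (-h) := by
      refine intervalIntegral.integral_eq_sub_of_hasDerivAt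
        (f := fun t => h*P*t^3/3 + S*t^4/24)
        (f' := fun t => t^2*h*P - |t|^3*S/6) ?_ ?_
      · intro t ht
        rw [Set.uIcc_of_le (by linarith : (-h:ℝ) ≤ 0)] at ht
        have habs : |t| = -t := abs_of_nonpos ht.2
        have d3 : HasDerivAt (fun s : ℝ => s^3) (3*t^2) t := by
          simpa using hasDerivAt_pow 3 t
        have d4 : HasDerivAt (fun s : ℝ => s^4) (4*t^3) t := by
          simpa using hasDerivAt_pow 4 t
        have H : HasDerivAt (fun s => h*P*s^3/3 + S*s^4/24) (h*P*(3*t^2)/3 + S*(4*t^3)/24) t :=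
          ((d3.const_mul (h*P)).div_const 3).add ((d4.const_mul S).div_const 24)
        have : h*P*(3*t^2)/3 + S*(4*t^3)/24 = t^2*h*P - |t|^3*S/6 := by
          rw [habs]; ring
        rwa [this] at H
      · exact hcont.intervalIntegrable _ _
    rw [this]; ring
  have hp2 : (∫ t in (0:ℝ)..h, (t^2*h*P - |t|^3*S/6)) = h^4*P/3 - h^4*S/24 := by
    have : (∫ t in (0:ℝ)..h, (t^2*h*P - |t|^3*S/6))
        = (fun t => h*P*t^3/3 - S*t^4/24) h - (fun t => h*P*t^3/3 - S*t^4/24) 0 := by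
      refine intervalIntegral.integral_eq_sub_of_hasDerivAt
        (f := fun t => h*P*t^3/3 - S*t^4/24)
        (f' := fun t => t^2*h*P - |t|^3*S/6) ?_ ?_
      · intro t ht
        rw [Set.uIcc_of_le hh.le] at ht
        have habs : |t| = t := abs_of_nonneg ht.1
        have d3 : HasDerivAt (fun s : ℝ => s^3) (3*t^2) t := by
          simpa using hasDerivAt_pow 3 t
        have d4 : HasDerivAt (fun s : ℝ => s^4) (4*t^3) t := by
          simpa using hasDerivAt_pow 4 t
        have H : HasDerivAt (fun s => h*P*s^3/3 - S*s^4/24) (h*P*(3*t^2)/3 - S*(4*t^3)/24) t :=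
          ((d3.const_mul (h*P)).div_const 3).sub ((d4.const_mul S).div_const 24)
        have : h*P*(3*t^2)/3 - S*(4*t^3)/24 = t^2*h*P - |t|^3*S/6 := by
          rw [habs]; ring
        rwa [this] at H
      · exact hcont.intervalIntegrable _ _
    rw [this]; ring
  rw [hp1, hp2]; ring


lemma cbound {K : ℕ} {c : ℕ → ℝ} (hK : 1 ≤ K) (hcpos : 0 < c 1)
    (hcmono : ∀ k : ℕ, 1 ≤ k → k < K → c k < c (k + 1)) :
    ∀ k ∈ Finset.Icc 1 K, 0 < c k ∧ c k ≤ c K := by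
  have key : ∀ d m, 1 ≤ m → m + d ≤ K → c m ≤ c (m + d) := by
    intro d
    induction d with
    | zero => intro m _ _; simp
    | succ d ih =>
      intro m hm hK'
      have h1 := ih m hm (by omega)
      have h2 := hcmono (m + d) (by omega) (by omega)
      have : m + (d + 1) = (m + d) + 1 := by omega
      rw [this]
      linarith
  intro k hk
  obtain ⟨hk1, hkK⟩ := Finset.mem_Icc.1 hk
  constructor
  · have := key (k - 1) 1 le_rfl (by omega)
    rw [show 1 + (k - 1) = k by omega] at this
    linarith
  · have := key (K - k) k hk1 (by omega)
    rwa [show k + (K - k) = K by omega] at this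

end QCE1D

open QCE1D in
set_option maxHeartbeats 1000000 in
theorem quadrature_consistency_error_1d
    (h : ℝ) (hh : 0 < h) (N : ℕ) (hN : 3 ≤ N)
    (v w : ℝ → ℝ) (hv : Continuous v) (hw : Continuous w)
    (a b : ℕ → ℝ)
    (hv0 : ∀ x : ℝ, x ≤ h ∨ ((N : ℝ) - 1) * h ≤ x → v x = 0)
    (hw0 : ∀ x : ℝ, x ≤ h ∨ ((N : ℝ) - 1) * h ≤ x → w x = 0)
    (hva : ∀ i ∈ Finset.Icc 1 N, ∀ x ∈ Set.Icc (((i : ℝ) - 1) * h) ((i : ℝ) * h),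
      v x = v (((i : ℝ) - 1) * h) + a i * (x - ((i : ℝ) - 1) * h))
    (hwb : ∀ i ∈ Finset.Icc 1 N, ∀ x ∈ Set.Icc (((i : ℝ) - 1) * h) ((i : ℝ) * h),
      w x = w (((i : ℝ) - 1) * h) + b i * (x - ((i : ℝ) - 1) * h))
    (K : ℕ) (hK : 1 ≤ K)
    (c ω : ℕ → ℝ)
    (hcpos : 0 < c 1)
    (hcmono : ∀ k : ℕ, 1 ≤ k → k < K → c k < c (k + 1))
    (hclt : c K < h)
    (hωnonneg : ∀ k ∈ Finset.Icc 1 K, 0 ≤ ω k)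
    (hexact : 2 * ∑ k ∈ Finset.Icc 1 K, ω k * (c k) ^ 2 = 2 * h ^ 3 / 3) :
    (∫ x in (0 : ℝ)..(N : ℝ) * h, ∫ y in (0 : ℝ)..(N : ℝ) * h,
          (if |y - x| < h then h⁻¹ ^ 3 * ((v y - v x) * (w y - w x)) else 0)) -
        (∫ x in (0 : ℝ)..(N : ℝ) * h,
          h⁻¹ ^ 3 * ∑ k ∈ Finset.Icc 1 K,
            ((v (x + c k) - v x) * (w (x + c k) - w x) +
              (v (x - c k) - v x) * (w (x - c k) - w x)) * ω k) =
      ((1 / (3 * h ^ 3)) * ∑ k ∈ Finset.Icc 1 K, ω k * (c k) ^ 3 - h / 12) *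
        ∑ i ∈ Finset.Icc 1 (N - 1), (a (i + 1) - a i) * (b (i + 1) - b i) ∧
    |(∫ x in (0 : ℝ)..(N : ℝ) * h, ∫ y in (0 : ℝ)..(N : ℝ) * h,
          (if |y - x| < h then h⁻¹ ^ 3 * ((v y - v x) * (w y - w x)) else 0)) -
        (∫ x in (0 : ℝ)..(N : ℝ) * h,
          h⁻¹ ^ 3 * ∑ k ∈ Finset.Icc 1 K,
            ((v (x + c k) - v x) * (w (x + c k) - w x) +
              (v (x - c k) - v x) * (w (x - c k) - w x)) * ω k)| ≤
      (7 * h / 36) * ∑ i ∈ Finset.Icc 1 (N - 1), |a (i + 1) - a i| * |b (i + 1) - b i| := by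
  have hne : h ≠ 0 := hh.ne'
  have hNh : (0:ℝ) ≤ (N:ℝ)*h := by positivity
  set P : ℝ := ∑ i ∈ Finset.Icc 1 (N-1), a i * b i with hPdef
  set S : ℝ := ∑ i ∈ Finset.Icc 1 (N-1), (a (i+1) - a i) * (b (i+1) - b i) with hSdef
  set C3 : ℝ := ∑ k ∈ Finset.Icc 1 K, ω k * (c k) ^ 3 with hC3def
  -- T1
  have hT1 : (∫ x in (0 : ℝ)..(N : ℝ) * h, ∫ y in (0 : ℝ)..(N : ℝ) * h,
        (if |y - x| < h then h⁻¹ ^ 3 * ((v y - v x) * (w y - w x)) else 0))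
      = h⁻¹^3 * (2*h^4*P/3 - h^4*S/12) := by
    have hstep : Set.EqOn
        (fun x => ∫ y in (0 : ℝ)..(N : ℝ) * h,
          (if |y - x| < h then h⁻¹ ^ 3 * ((v y - v x) * (w y - w x)) else 0))
        (fun x => h⁻¹^3 * ∫ t in (-h:ℝ)..h, (v (x+t) - v x) * (w (x+t) - w x))
        (Set.uIcc (0:ℝ) ((N:ℝ)*h)) := by
      rw [Set.uIcc_of_le hNh]
      intro x hx
      exact inner_rewrite hh hN hv hw hv0 hw0 hx.1 hx.2
    rw [intervalIntegral.integral_congr hstep, intervalIntegral.integral_const_mul]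
    congr 1
    rw [fubini_swap hh hN hv hw]
    apply outer_eval hh P S
    intro t ht
    rcases le_or_gt 0 t with h0 | h0
    · rw [L_formula hh hN hv hw hv0 hw0 hva hwb h0 ht.2, abs_of_nonneg h0]
    · have he : Set.EqOn (fun x => (v (x+t) - v x) * (w (x+t) - w x))
          (fun x => (v (x - (-t)) - v x) * (w (x - (-t)) - w x))
          (Set.uIcc (0:ℝ) ((N:ℝ)*h)) := by
        intro x _; simp only [sub_neg_eq_add]
      rw [intervalIntegral.integral_congr he,
        shift_neg hh hN hv hw hv0 hw0 (by linarith) (by linarith [ht.1]),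
        L_formula hh hN hv hw hv0 hw0 hva hwb (by linarith) (by linarith [ht.1]),
        abs_of_nonpos h0.le]
      ring
  -- T2
  have hT2 : (∫ x in (0 : ℝ)..(N : ℝ) * h,
        h⁻¹ ^ 3 * ∑ k ∈ Finset.Icc 1 K,
          ((v (x + c k) - v x) * (w (x + c k) - w x) +
            (v (x - c k) - v x) * (w (x - c k) - w x)) * ω k)
      = h⁻¹^3 * ∑ k ∈ Finset.Icc 1 K, (2*((c k)^2*h*P - (c k)^3*S/6)) * ω k := by
    rw [intervalIntegral.integral_const_mul]
    congr 1
    have hcontk : ∀ k : ℕ, Continuous (fun x =>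
        ((v (x + c k) - v x) * (w (x + c k) - w x) +
          (v (x - c k) - v x) * (w (x - c k) - w x)) * ω k) := by
      intro k
      have hps : Continuous (fun x : ℝ => x + c k) := continuous_id.add continuous_const
      have hms : Continuous (fun x : ℝ => x - c k) := continuous_id.sub continuous_const
      exact ((((hv.comp hps).sub hv).mul ((hw.comp hps).sub hw)).add
        (((hv.comp hms).sub hv).mul ((hw.comp hms).sub hw))).mul continuous_const
    rw [intervalIntegral.integral_finset_sum (fun k _ => (hcontk k).intervalIntegrable _ _)]
    apply Finset.sum_congr rfl
    intro k hk
    obtain ⟨hck, hckK⟩ := cbound hK hcpos hcmono k hk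
    have hch : c k ≤ h := le_of_lt (lt_of_le_of_lt hckK hclt)
    rw [intervalIntegral.integral_mul_const]
    congr 1
    have hps : Continuous (fun x : ℝ => x + c k) := continuous_id.add continuous_const
    have hms : Continuous (fun x : ℝ => x - c k) := continuous_id.sub continuous_const
    have hcA : Continuous (fun x => (v (x + c k) - v x) * (w (x + c k) - w x)) :=
      ((hv.comp hps).sub hv).mul ((hw.comp hps).sub hw)
    have hcB : Continuous (fun x => (v (x - c k) - v x) * (w (x - c k) - w x)) :=
      ((hv.comp hms).sub hv).mul ((hw.comp hms).sub hw)
    rw [intervalIntegral.integral_add (hcA.intervalIntegrable _ _) (hcB.intervalIntegrable _ _),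
      shift_neg hh hN hv hw hv0 hw0 hck.le hch,
      L_formula hh hN hv hw hv0 hw0 hva hwb hck.le hch]
    ring
  -- sum simplification
  have hq : ∑ k ∈ Finset.Icc 1 K, ω k * (c k) ^ 2 = h^3/3 := by linarith
  have hsum : ∑ k ∈ Finset.Icc 1 K, (2*((c k)^2*h*P - (c k)^3*S/6)) * ω k
      = 2*h*P*(h^3/3) - S/3*C3 := by
    have e : ∀ k ∈ Finset.Icc 1 K, (2*((c k)^2*h*P - (c k)^3*S/6)) * ω k
        = 2*h*P*(ω k * (c k)^2) - S/3*(ω k * (c k)^3) := fun k _ => by ring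
    rw [Finset.sum_congr rfl e, Finset.sum_sub_distrib, ← Finset.mul_sum, ← Finset.mul_sum,
      hq, hC3def]
  have main : (∫ x in (0 : ℝ)..(N : ℝ) * h, ∫ y in (0 : ℝ)..(N : ℝ) * h,
        (if |y - x| < h then h⁻¹ ^ 3 * ((v y - v x) * (w y - w x)) else 0)) -
      (∫ x in (0 : ℝ)..(N : ℝ) * h,
        h⁻¹ ^ 3 * ∑ k ∈ Finset.Icc 1 K,
          ((v (x + c k) - v x) * (w (x + c k) - w x) +
            (v (x - c k) - v x) * (w (x - c k) - w x)) * ω k)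
      = ((1 / (3 * h ^ 3)) * C3 - h / 12) * S := by
    rw [hT1, hT2, hsum]
    field_simp
    ring
  refine ⟨main, ?_⟩
  rw [main]
  -- bounds
  have hC3nonneg : 0 ≤ C3 := by
    rw [hC3def]
    apply Finset.sum_nonneg
    intro k hk
    exact mul_nonneg (hωnonneg k hk) (pow_nonneg (cbound hK hcpos hcmono k hk).1.le 3)
  have hC3le : C3 ≤ h^4/3 := by
    have hb : ∀ k ∈ Finset.Icc 1 K, ω k * (c k)^3 ≤ h * (ω k * (c k)^2) := by
      intro k hk
      obtain ⟨hck, hckK⟩ := cbound hK hcpos hcmono k hk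
      have hch : c k ≤ h := le_of_lt (lt_of_le_of_lt hckK hclt)
      have hωk := hωnonneg k hk
      nlinarith [mul_nonneg (mul_nonneg hωk (sq_nonneg (c k))) (sub_nonneg.2 hch)]
    calc C3 ≤ ∑ k ∈ Finset.Icc 1 K, h * (ω k * (c k)^2) := Finset.sum_le_sum hb
      _ = h * (h^3/3) := by rw [← Finset.mul_sum, hq]
      _ = h^4/3 := by ring
  have hu1 : 0 ≤ (1/(3*h^3)) * C3 := mul_nonneg (by positivity) hC3nonneg
  have hu2 : (1/(3*h^3)) * C3 ≤ h/9 := by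
    calc (1/(3*h^3)) * C3 ≤ (1/(3*h^3)) * (h^4/3) :=
          mul_le_mul_of_nonneg_left hC3le (by positivity)
      _ = h/9 := by field_simp; ring
  have hE : |(1 / (3 * h ^ 3)) * C3 - h / 12| ≤ 7*h/36 :=
    abs_le.2 ⟨by linarith, by linarith⟩
  have hSb : |S| ≤ ∑ i ∈ Finset.Icc 1 (N-1), |a (i+1) - a i| * |b (i+1) - b i| := by
    rw [hSdef]
    calc |∑ i ∈ Finset.Icc 1 (N-1), (a (i+1) - a i) * (b (i+1) - b i)|
        ≤ ∑ i ∈ Finset.Icc 1 (N-1), |(a (i+1) - a i) * (b (i+1) - b i)| :=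
          Finset.abs_sum_le_sum_abs _ _
      _ = ∑ i ∈ Finset.Icc 1 (N-1), |a (i+1) - a i| * |b (i+1) - b i| :=
          Finset.sum_congr rfl (fun i _ => abs_mul _ _)
  rw [abs_mul]
  exact mul_le_mul hE hSb (abs_nonneg _) (by positivity)
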